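/- arXiv:2211.05669 — 4 statements merged into one kernel-verified Lean document; each statement's English description precedes it below -/
import Mathlib

section
/- Let 1 ≤ d ≤ n with gcd(n,d)=1 and let 1 ≤ b ≤ n be such that bd ≡ 1 (mod n). If the Hirzebruch–Jung expansion of n/d is (a₀, a₁, …, a_r), then the Hirzebruch–Jung expansion of n/b is (a_r, …, a₁, a₀). Consequently, the expansion of n/d is symmetric (a_i = a_{r−i} for all i) if and only if d² ≡ 1 (mod n). -/
def hjEval : List ℕ → ℚ
  | [] => 0
  | a :: l => (a : ℚ) - 1 / hjEval l

def IsHJExpansion (n d : ℕ) (L : List ℕ) : Prop :=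
  L ≠ [] ∧ (∀ x ∈ L, 2 ≤ x) ∧ hjEval L = (n : ℚ) / (d : ℚ)

/-- numerator/denominator pair: `hjEval L = (hjP L).1 / (hjP L).2`. -/
def hjP : List ℕ → ℤ × ℤ
  | [] => (1, 0)
  | a :: l => ((a : ℤ) * (hjP l).1 - (hjP l).2, (hjP l).1)

/-- the second pair (minus the second column of the matrix product). -/
def hjU : List ℕ → ℤ × ℤ
  | [] => (0, -1)
  | a :: l => ((a : ℤ) * (hjU l).1 - (hjU l).2, (hjU l).1)

lemma hj_inv (L : List ℕ) (h2 : ∀ x ∈ L, 2 ≤ x) :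
    1 ≤ (hjP L).1 ∧ 0 ≤ (hjP L).2 ∧ (hjP L).2 < (hjP L).1 ∧
    0 ≤ (hjU L).1 ∧ (hjU L).2 < (hjU L).1 ∧ (hjU L).2 < (hjP L).2 ∧
    (hjP L).2 + (hjU L).1 ≤ (hjP L).1 + (hjU L).2 ∧
    (hjP L).2 * (hjU L).1 - (hjP L).1 * (hjU L).2 = 1 ∧
    (L ≠ [] → 1 ≤ (hjP L).2 ∧ 1 ≤ (hjU L).1 ∧ (hjU L).1 < (hjP L).1 ∧ 0 ≤ (hjU L).2) := by
  induction L with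
  | nil => simp [hjP, hjU]
  | cons a l ih =>
    have ha : (2 : ℤ) ≤ (a : ℤ) := by exact_mod_cast h2 a (by simp)
    obtain ⟨h1, h2', h3, h4, h5, h6, h7, h8, h9⟩ := ih (fun x hx => h2 x (by simp [hx]))
    set p := (hjP l).1 with hp
    set q := (hjP l).2 with hq
    set u := (hjU l).1 with hu
    set v := (hjU l).2 with hv
    have e1 : (hjP (a :: l)).1 = (a : ℤ) * p - q := rfl
    have e2 : (hjP (a :: l)).2 = p := rfl
    have e3 : (hjU (a :: l)).1 = (a : ℤ) * u - v := rfl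
    have e4 : (hjU (a :: l)).2 = u := rfl
    rw [e1, e2, e3, e4]
    have hap : 2 * p ≤ (a : ℤ) * p := by
      nlinarith [mul_nonneg (show (0:ℤ) ≤ (a:ℤ) - 2 by linarith) (show (0:ℤ) ≤ p by linarith)]
    have hau : 2 * u ≤ (a : ℤ) * u := by
      nlinarith [mul_nonneg (show (0:ℤ) ≤ (a:ℤ) - 2 by linarith) h4]
    have haxx : 2 * p - 2 * u ≤ (a : ℤ) * p - (a : ℤ) * u := by
      nlinarith [mul_nonneg (show (0:ℤ) ≤ (a:ℤ) - 2 by linarith)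
        (show (0:ℤ) ≤ p - u by linarith)]
    refine ⟨by linarith, by linarith, by linarith, by linarith, by linarith, by linarith,
      by linarith, by linear_combination h8, fun _ => ⟨h1, by linarith, by linarith, h4⟩⟩

lemma hjEval_eq_div (L : List ℕ) (h2 : ∀ x ∈ L, 2 ≤ x) :
    hjEval L = ((hjP L).1 : ℚ) / ((hjP L).2 : ℚ) := by
  induction L with
  | nil => simp [hjEval, hjP]
  | cons a l ih =>
    have h2' : ∀ x ∈ l, 2 ≤ x := fun x hx => h2 x (by simp [hx])
    have hinv := hj_inv l h2'
    have hp1 : (1 : ℤ) ≤ (hjP l).1 := hinv.1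
    have hpQ : ((hjP l).1 : ℚ) ≠ 0 := by
      exact_mod_cast (by linarith : (hjP l).1 ≠ 0)
    have e1 : (hjP (a :: l)).1 = (a : ℤ) * (hjP l).1 - (hjP l).2 := rfl
    have e2 : (hjP (a :: l)).2 = (hjP l).1 := rfl
    rw [show hjEval (a :: l) = (a : ℚ) - 1 / hjEval l from rfl, ih h2', e1, e2,
      one_div_div]
    push_cast
    field_simp

lemma hjEval_gt_one (L : List ℕ) (h2 : ∀ x ∈ L, 2 ≤ x) (hne : L ≠ []) :
    1 < hjEval L := by
  have hinv := hj_inv L h2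
  have hq1 : (1 : ℤ) ≤ (hjP L).2 := (hinv.2.2.2.2.2.2.2.2 hne).1
  have hqp : (hjP L).2 < (hjP L).1 := hinv.2.2.1
  have hq1' : (1:ℚ) ≤ ((hjP L).2 : ℚ) := by exact_mod_cast hq1
  have hqp' : ((hjP L).2 : ℚ) < ((hjP L).1 : ℚ) := by exact_mod_cast hqp
  rw [hjEval_eq_div L h2, lt_div_iff₀ (by linarith)]
  linarith

lemma hj_append (l : List ℕ) (a : ℕ) :
    hjP (l ++ [a]) = ((a : ℤ) * (hjP l).1 - (hjU l).1, (a : ℤ) * (hjP l).2 - (hjU l).2) ∧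
    hjU (l ++ [a]) = hjP l := by
  induction l with
  | nil =>
    refine ⟨?_, ?_⟩ <;> simp [hjP, hjU] <;> ring
  | cons b l ih =>
    have e1 : (b :: l) ++ [a] = b :: (l ++ [a]) := rfl
    rw [e1]
    constructor
    · show ((b:ℤ) * (hjP (l ++ [a])).1 - (hjP (l ++ [a])).2, (hjP (l ++ [a])).1) = _
      rw [ih.1]
      show ((b:ℤ) * ((a:ℤ) * (hjP l).1 - (hjU l).1) - ((a:ℤ) * (hjP l).2 - (hjU l).2),
        (a:ℤ) * (hjP l).1 - (hjU l).1) = _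
      have : (hjP (b :: l)) = ((b : ℤ) * (hjP l).1 - (hjP l).2, (hjP l).1) := rfl
      have h2 : (hjU (b :: l)) = ((b : ℤ) * (hjU l).1 - (hjU l).2, (hjU l).1) := rfl
      rw [this, h2]
      simp only [Prod.mk.injEq]
      exact ⟨by ring, trivial⟩
    · show ((b:ℤ) * (hjU (l ++ [a])).1 - (hjU (l ++ [a])).2, (hjU (l ++ [a])).1) = _
      rw [ih.2]
      rfl

lemma hj_reverse (L : List ℕ) :
    hjP L.reverse = ((hjP L).1, (hjU L).1) ∧ hjU L.reverse = ((hjP L).2, (hjU L).2) := by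
  induction L with
  | nil => simp [hjP, hjU]
  | cons a l ih =>
    rw [List.reverse_cons]
    obtain ⟨hA, hB⟩ := hj_append l.reverse a
    rw [hA, hB, ih.1, ih.2]
    constructor <;> rfl

lemma hjEval_head_lt (a : ℕ) (l : List ℕ) (h2 : ∀ x ∈ a :: l, 2 ≤ x) (hl : l ≠ []) :
    (a : ℚ) - 1 < hjEval (a :: l) ∧ hjEval (a :: l) < a := by
  have h2' : ∀ x ∈ l, 2 ≤ x := fun x hx => h2 x (by simp [hx])
  have ht := hjEval_gt_one l h2' hl
  have ht0 : (0:ℚ) < hjEval l := by linarith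
  have h1 : 0 < 1 / hjEval l := by positivity
  have h2'' : 1 / hjEval l < 1 := by
    rw [div_lt_one ht0]; linarith
  constructor
  · show (a : ℚ) - 1 < (a : ℚ) - 1 / hjEval l
    linarith
  · show (a : ℚ) - 1 / hjEval l < a
    linarith

lemma hj_unique (L₁ : List ℕ) : ∀ L₂ : List ℕ, (∀ x ∈ L₁, 2 ≤ x) → (∀ x ∈ L₂, 2 ≤ x) →
    hjEval L₁ = hjEval L₂ → L₁ = L₂ := by
  induction L₁ with
  | nil =>
    intro L₂ _ h2 he
    by_contra hne
    have := hjEval_gt_one L₂ h2 (fun h => hne (by simp [h]))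
    rw [← he] at this
    simp [hjEval] at this
    linarith
  | cons a l ih =>
    intro L₂ h1 h2 he
    rcases L₂ with _ | ⟨c, m⟩
    · exfalso
      have := hjEval_gt_one (a :: l) h1 (by simp)
      rw [he] at this
      simp [hjEval] at this
      linarith
    rcases l with _ | ⟨b, l'⟩ <;> rcases m with _ | ⟨e, m'⟩
    · have : (a : ℚ) = (c : ℚ) := by
        have e1 : hjEval [a] = (a : ℚ) := by simp [hjEval]
        have e2 : hjEval [c] = (c : ℚ) := by simp [hjEval]
        rw [e1, e2] at he; exact he
      have : a = c := by exact_mod_cast this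
      rw [this]
    · exfalso
      have hb := hjEval_head_lt c (e :: m') h2 (by simp)
      have e1 : hjEval [a] = (a : ℚ) := by simp [hjEval]
      rw [e1] at he
      have h1' : (c : ℚ) - 1 < (a : ℚ) := by rw [he]; exact hb.1
      have h2' : (a : ℚ) < (c : ℚ) := by rw [he]; exact hb.2
      have k1 : c < a + 1 := by exact_mod_cast (by push_cast; linarith : (c : ℚ) < (a : ℚ) + 1)
      have k2 : a < c := by exact_mod_cast h2'
      omega
    · exfalso
      have hb := hjEval_head_lt a (b :: l') h1 (by simp)
      have e1 : hjEval [c] = (c : ℚ) := by simp [hjEval]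
      rw [e1] at he
      have h1' : (a : ℚ) - 1 < (c : ℚ) := by rw [← he]; exact hb.1
      have h2' : (c : ℚ) < (a : ℚ) := by rw [← he]; exact hb.2
      have k1 : a < c + 1 := by exact_mod_cast (by push_cast; linarith : (a : ℚ) < (c : ℚ) + 1)
      have k2 : c < a := by exact_mod_cast h2'
      omega
    · have hbA := hjEval_head_lt a (b :: l') h1 (by simp)
      have hbC := hjEval_head_lt c (e :: m') h2 (by simp)
      have hac : a = c := by
        have h1' : (a : ℚ) - 1 < (c : ℚ) := by
          calc (a : ℚ) - 1 < hjEval (a :: b :: l') := hbA.1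
          _ = hjEval (c :: e :: m') := he
          _ < c := hbC.2
        have h2' : (c : ℚ) - 1 < (a : ℚ) := by
          calc (c : ℚ) - 1 < hjEval (c :: e :: m') := hbC.1
          _ = hjEval (a :: b :: l') := he.symm
          _ < a := hbA.2
        have k1 : a < c + 1 := by exact_mod_cast (by push_cast; linarith : (a : ℚ) < (c : ℚ) + 1)
        have k2 : c < a + 1 := by exact_mod_cast (by push_cast; linarith : (c : ℚ) < (a : ℚ) + 1)
        omega
      have h1' : ∀ x ∈ b :: l', 2 ≤ x := fun x hx => h1 x (by simp [hx])
      have h2'' : ∀ x ∈ e :: m', 2 ≤ x := fun x hx => h2 x (by simp [hx])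
      have ht1 := hjEval_gt_one (b :: l') h1' (by simp)
      have ht2 := hjEval_gt_one (e :: m') h2'' (by simp)
      have htail : hjEval (b :: l') = hjEval (e :: m') := by
        have e1 : hjEval (a :: b :: l') = (a : ℚ) - 1 / hjEval (b :: l') := rfl
        have e2 : hjEval (c :: e :: m') = (c : ℚ) - 1 / hjEval (e :: m') := rfl
        rw [e1, e2, hac] at he
        have hinv : 1 / hjEval (b :: l') = 1 / hjEval (e :: m') := by linarith
        have hn1 : hjEval (b :: l') ≠ 0 := by linarith
        have hn2 : hjEval (e :: m') ≠ 0 := by linarith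
        field_simp at hinv
        linarith [hinv]
      have := ih (e :: m') h1' h2'' htail
      rw [hac, this]


theorem stmt11 (n d b : ℕ) (hd1 : 1 ≤ d) (hdn : d ≤ n) (hg : Nat.gcd n d = 1)
    (hb1 : 1 ≤ b) (hbn : b ≤ n) (hbd : b * d ≡ 1 [MOD n])
    (L : List ℕ) (hL : IsHJExpansion n d L) :
    IsHJExpansion n b L.reverse ∧ (L.reverse = L ↔ d ^ 2 ≡ 1 [MOD n]) := by
  obtain ⟨hne, h2, hval⟩ := hL
  obtain ⟨h1, h2', h3, h4, h5, h6, h7, h8, h9⟩ := hj_inv L h2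
  obtain ⟨hq1, hu1, hup, hv0⟩ := h9 hne
  set p := (hjP L).1 with hp
  set q := (hjP L).2 with hq
  set u := (hjU L).1 with hu
  set v := (hjU L).2 with hv
  have hEv : hjEval L = (p : ℚ) / (q : ℚ) := hjEval_eq_div L h2
  have hqd : (p : ℚ) / (q : ℚ) = (n : ℚ) / (d : ℚ) := by rw [← hEv]; exact hval
  have hqQ : ((q : ℚ)) ≠ 0 := by
    have : (0:ℤ) < q := by linarith
    exact_mod_cast this.ne'
  have hdQ : ((d : ℚ)) ≠ 0 := by positivity
  have hcross : p * (d : ℤ) = (n : ℤ) * q := by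
    have := (div_eq_div_iff hqQ hdQ).mp hqd
    exact_mod_cast this
  have hco_nd : IsCoprime (n : ℤ) (d : ℤ) := by
    rw [Int.isCoprime_iff_gcd_eq_one, Int.gcd_natCast_natCast]
    exact hg
  have hco_qp : IsCoprime q p := ⟨u, -v, by linear_combination h8⟩
  have hq_dvd : q ∣ (d : ℤ) :=
    hco_qp.dvd_of_dvd_mul_left ⟨(n : ℤ), by linear_combination hcross⟩
  have hd_dvd : (d : ℤ) ∣ q :=
    hco_nd.symm.dvd_of_dvd_mul_left ⟨p, by linear_combination -hcross⟩
  have hq_eq : q = (d : ℤ) := Int.dvd_antisymm (by linarith) (by positivity) hq_dvd hd_dvd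
  have hp_eq : p = (n : ℤ) := by
    have hd0 : (d : ℤ) ≠ 0 := by positivity
    have : p * (d : ℤ) = (n : ℤ) * (d : ℤ) := by rw [hcross, hq_eq]
    exact mul_right_cancel₀ hd0 this
  have hdltn : d < n := by exact_mod_cast hq_eq ▸ hp_eq ▸ h3
  have hn2 : 2 ≤ n := by omega
  have hbdZ : (n : ℤ) ∣ (1 : ℤ) - (b : ℤ) * (d : ℤ) := by
    have := (Nat.modEq_iff_dvd).mp hbd
    push_cast at this ⊢
    exact this
  have hbltn : b < n := by
    rcases Nat.lt_or_ge b n with h | h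
    · exact h
    · exfalso
      have hb_eq : b = n := le_antisymm hbn h
      subst hb_eq
      have hdvd1 : (b : ℤ) ∣ 1 := by
        have h2'' : (b : ℤ) ∣ (b : ℤ) * (d : ℤ) := dvd_mul_right _ _
        have := dvd_add hbdZ h2''
        simpa using this
      have hle : (b : ℤ) ≤ 1 := Int.le_of_dvd one_pos hdvd1
      have : (2 : ℤ) ≤ (b : ℤ) := by exact_mod_cast hn2
      linarith
  -- d * u ≡ 1 mod n
  have hduZ : (n : ℤ) ∣ (d : ℤ) * u - 1 :=
    ⟨v, by rw [← hq_eq, ← hp_eq]; linear_combination h8⟩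
  have hub : u = (b : ℤ) := by
    have hdvd : (n : ℤ) ∣ (u - (b : ℤ)) * (d : ℤ) := by
      have : (u - (b : ℤ)) * (d : ℤ) = ((d : ℤ) * u - 1) + ((1 : ℤ) - (b : ℤ) * (d : ℤ)) := by
        ring
      rw [this]
      exact dvd_add hduZ hbdZ
    have hdvd2 : (n : ℤ) ∣ u - (b : ℤ) := hco_nd.dvd_of_dvd_mul_right hdvd
    obtain ⟨k, hk⟩ := hdvd2
    have hun : u < (n : ℤ) := hp_eq ▸ hup
    have hb1' : (1 : ℤ) ≤ (b : ℤ) := by exact_mod_cast hb1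
    have hbn' : (b : ℤ) < (n : ℤ) := by exact_mod_cast hbltn
    have hn0 : (0 : ℤ) < (n : ℤ) := by positivity
    have hk0 : k = 0 := by
      rcases lt_trichotomy k 0 with h | h | h
      · exfalso
        nlinarith [mul_le_mul_of_nonneg_left (show k ≤ -1 by omega) hn0.le]
      · exact h
      · exfalso
        nlinarith [mul_le_mul_of_nonneg_left (show (1:ℤ) ≤ k by omega) hn0.le]
    have : u - (b : ℤ) = 0 := by rw [hk, hk0, mul_zero]
    linarith
  have h2rev : ∀ x ∈ L.reverse, 2 ≤ x := fun x hx => h2 x (List.mem_reverse.mp hx)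
  have hrevEval : hjEval L.reverse = (n : ℚ) / (b : ℚ) := by
    rw [hjEval_eq_div L.reverse h2rev, (hj_reverse L).1]
    rw [show ((p, u).1 : ℤ) = p from rfl, show ((p, u).2 : ℤ) = u from rfl, hp_eq, hub]
    push_cast
    ring
  have hHJrev : IsHJExpansion n b L.reverse :=
    ⟨by simpa using hne, h2rev, hrevEval⟩
  refine ⟨hHJrev, ?_, ?_⟩
  · intro hrev
    have heq : (n : ℚ) / (b : ℚ) = (n : ℚ) / (d : ℚ) := by rw [← hrevEval, hrev, hval]
    have hbQ : ((b : ℚ)) ≠ 0 := by positivity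
    have hnQ : ((n : ℚ)) ≠ 0 := by positivity
    have hdb : d = b := by
      have h2'' := (div_eq_div_iff hbQ hdQ).mp heq
      exact_mod_cast mul_left_cancel₀ hnQ h2''
    rw [← hdb] at hbd
    rw [pow_two]
    exact hbd
  · intro hsq
    -- d ≡ b mod n, so d = b
    have hsqZ : (n : ℤ) ∣ (1 : ℤ) - (d : ℤ) * (d : ℤ) := by
      have h := (Nat.modEq_iff_dvd).mp hsq
      push_cast at h
      have e : (1 : ℤ) - (d : ℤ) * (d : ℤ) = 1 - (d : ℤ) ^ 2 := by ring
      rw [e]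
      exact h
    have hdvd : (n : ℤ) ∣ ((d : ℤ) - (b : ℤ)) * (d : ℤ) := by
      have : ((d : ℤ) - (b : ℤ)) * (d : ℤ) =
          ((1 : ℤ) - (b : ℤ) * (d : ℤ)) - ((1 : ℤ) - (d : ℤ) * (d : ℤ)) := by ring
      rw [this]
      exact dvd_sub hbdZ hsqZ
    have hdvd2 : (n : ℤ) ∣ (d : ℤ) - (b : ℤ) := hco_nd.dvd_of_dvd_mul_right hdvd
    have hdb : d = b := by
      obtain ⟨k, hk⟩ := hdvd2
      have hd1' : (1 : ℤ) ≤ (d : ℤ) := by exact_mod_cast hd1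
      have hdn' : (d : ℤ) < (n : ℤ) := by exact_mod_cast hdltn
      have hb1' : (1 : ℤ) ≤ (b : ℤ) := by exact_mod_cast hb1
      have hbn' : (b : ℤ) < (n : ℤ) := by exact_mod_cast hbltn
      have hn0 : (0 : ℤ) < (n : ℤ) := by positivity
      have hk0 : k = 0 := by
        rcases lt_trichotomy k 0 with h | h | h
        · exfalso
          have := mul_le_mul_of_nonneg_left (show k ≤ -1 by omega) hn0.le
          linarith
        · exact h
        · exfalso
          have := mul_le_mul_of_nonneg_left (show (1:ℤ) ≤ k by omega) hn0.le
          linarith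
      have hdb0 : (d : ℤ) - (b : ℤ) = 0 := by rw [hk, hk0, mul_zero]
      have : (d : ℤ) = (b : ℤ) := by linarith
      exact_mod_cast this
    apply hj_unique L.reverse L h2rev h2
    rw [hrevEval, hval, hdb]
end

section
/- Let q' be an odd positive integer coprime to 3. Then gcd(6q', 3+4q') = 1 and gcd(6q', 3+2q') = 1; moreover (3+4q')² ≡ (3+2q')² (mod 6q'). If d is the multiplicative inverse of 3+4q' modulo 6q', then (6q', e) is a critical pair, where e is the residue of d·(3+2q') modulo 6q' taken in [1, 6q']. -/
def IsCritical (n d : ℕ) : Prop :=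
  1 ≤ d ∧ d ≤ n ∧ Nat.gcd n d = 1 ∧ Even n ∧
    ∀ ℓ a : ℕ, ℓ.Prime → ℓ ^ a ∣ n →
      ((d : ℤ) ≡ 1 [ZMOD ((ℓ : ℤ) ^ a)] ∨ (d : ℤ) ≡ -1 [ZMOD ((ℓ : ℤ) ^ a)])

theorem stmt12 (q : ℕ) (hq : 0 < q) (hodd : Odd q) (h3 : Nat.Coprime q 3)
    (d : ℕ) (hd : d * (3 + 4 * q) ≡ 1 [MOD 6 * q])
    (e : ℕ) (he1 : 1 ≤ e) (he2 : e ≤ 6 * q) (hee : e ≡ d * (3 + 2 * q) [MOD 6 * q]) :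
    Nat.gcd (6 * q) (3 + 4 * q) = 1 ∧ Nat.gcd (6 * q) (3 + 2 * q) = 1 ∧
      (3 + 4 * q) ^ 2 ≡ (3 + 2 * q) ^ 2 [MOD 6 * q] ∧
      IsCritical (6 * q) e := by
  -- coprimality of 6q with 3+4q
  have c2a : Nat.Coprime 2 (3 + 4 * q) := by
    have := (Nat.coprime_add_mul_left_right 2 1 (1 + 2 * q)).mpr (by decide)
    rwa [show 1 + 2 * (1 + 2 * q) = 3 + 4 * q by ring] at this
  have c3a : Nat.Coprime 3 (3 + 4 * q) := by
    have := (Nat.coprime_add_mul_left_right 3 q (1 + q)).mpr h3.symm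
    rwa [show q + 3 * (1 + q) = 3 + 4 * q by ring] at this
  have cqa : Nat.Coprime q (3 + 4 * q) := by
    have := (Nat.coprime_add_mul_left_right q 3 4).mpr h3
    rwa [show 3 + q * 4 = 3 + 4 * q by ring] at this
  have cop1 : Nat.Coprime (6 * q) (3 + 4 * q) := by
    have : Nat.Coprime (2 * (3 * q)) (3 + 4 * q) :=
      Nat.Coprime.mul c2a (Nat.Coprime.mul c3a cqa)
    rwa [show 2 * (3 * q) = 6 * q by ring] at this
  -- coprimality of 6q with 3+2q
  have c2b : Nat.Coprime 2 (3 + 2 * q) := by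
    have := (Nat.coprime_add_mul_left_right 2 1 (1 + q)).mpr (by decide)
    rwa [show 1 + 2 * (1 + q) = 3 + 2 * q by ring] at this
  have c3b : Nat.Coprime 3 (3 + 2 * q) := by
    have h32 : Nat.Coprime 3 (2 * q) := Nat.Coprime.mul_right (by decide) h3.symm
    have := (Nat.coprime_add_mul_left_right 3 (2 * q) 1).mpr h32
    rwa [show 2 * q + 3 * 1 = 3 + 2 * q by ring] at this
  have cqb : Nat.Coprime q (3 + 2 * q) := by
    have := (Nat.coprime_add_mul_left_right q 3 2).mpr h3
    rwa [show 3 + q * 2 = 3 + 2 * q by ring] at this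
  have cop2 : Nat.Coprime (6 * q) (3 + 2 * q) := by
    have : Nat.Coprime (2 * (3 * q)) (3 + 2 * q) :=
      Nat.Coprime.mul c2b (Nat.Coprime.mul c3b cqb)
    rwa [show 2 * (3 * q) = 6 * q by ring] at this
  -- the square congruence
  have hsq : (3 + 4 * q) ^ 2 ≡ (3 + 2 * q) ^ 2 [MOD 6 * q] := by
    have key : (3 + 4 * q) ^ 2 = (3 + 2 * q) ^ 2 + 6 * q * (2 + 2 * q) := by ring
    rw [key]
    unfold Nat.ModEq
    simp [Nat.add_mul_mod_self_left]
  -- e^2 ≡ 1 mod 6q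
  have hz : ((e : ZMod (6 * q))) ^ 2 = 1 := by
    have hd' : ((d * (3 + 4 * q) : ℕ) : ZMod (6 * q)) = ((1 : ℕ) : ZMod (6 * q)) :=
      (ZMod.natCast_eq_natCast_iff _ _ _).mpr hd
    have hee' : ((e : ℕ) : ZMod (6 * q)) = ((d * (3 + 2 * q) : ℕ) : ZMod (6 * q)) :=
      (ZMod.natCast_eq_natCast_iff _ _ _).mpr hee
    have hsq' : (((3 + 4 * q) ^ 2 : ℕ) : ZMod (6 * q)) = (((3 + 2 * q) ^ 2 : ℕ) : ZMod (6 * q)) :=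
      (ZMod.natCast_eq_natCast_iff _ _ _).mpr hsq
    push_cast at hd' hee' hsq'
    rw [hee']
    calc ((d : ZMod (6 * q)) * (3 + 2 * (q : ZMod (6 * q)))) ^ 2
        = (d : ZMod (6 * q)) ^ 2 * (3 + 2 * (q : ZMod (6 * q))) ^ 2 := by ring
      _ = (d : ZMod (6 * q)) ^ 2 * (3 + 4 * (q : ZMod (6 * q))) ^ 2 := by rw [hsq']
      _ = ((d : ZMod (6 * q)) * (3 + 4 * (q : ZMod (6 * q)))) ^ 2 := by ring
      _ = 1 := by rw [hd']; ring
  have hes : e ^ 2 ≡ 1 [MOD 6 * q] := by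
    rw [← ZMod.natCast_eq_natCast_iff]
    push_cast
    exact hz
  -- gcd (6q) e = 1
  have cope : Nat.Coprime (6 * q) e := by
    have h1 : e * e ≡ 1 [MOD 6 * q] := by
      have : e ^ 2 = e * e := sq e
      rwa [this] at hes
    exact (Nat.coprime_of_mul_modEq_one e h1).symm
  -- e is odd
  have heodd : Odd e := by
    rcases Nat.even_or_odd e with he | he
    · exfalso
      obtain ⟨k, hk⟩ := he
      have h2e : 2 ∣ e := ⟨k, by omega⟩
      have h2n : 2 ∣ 6 * q := ⟨3 * q, by ring⟩
      have := Nat.dvd_gcd h2n h2e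
      rw [cope] at this
      omega
    · exact he
  refine ⟨cop1, cop2, hsq, he1, he2, cope, ⟨3 * q, by ring⟩, ?_⟩
  intro ℓ a hp hdvd
  -- integer divisibility: ℓ^a ∣ (e-1)(e+1)
  have hdint : ((ℓ : ℤ)) ^ a ∣ ((e : ℤ) - 1) * ((e : ℤ) + 1) := by
    have h1 : ((6 * q : ℕ) : ℤ) ∣ (1 : ℤ) - (e : ℤ) ^ 2 := by
      have := hes.dvd
      push_cast at this ⊢
      exact this
    have h2 : ((ℓ : ℤ)) ^ a ∣ ((6 * q : ℕ) : ℤ) := by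
      exact_mod_cast Int.natCast_dvd_natCast.mpr hdvd
    have h3' : ((ℓ : ℤ)) ^ a ∣ (e : ℤ) ^ 2 - 1 := by
      rw [← neg_sub (1 : ℤ) ((e : ℤ) ^ 2)]
      exact dvd_neg.mpr (h2.trans h1)
    have : ((e : ℤ)) ^ 2 - 1 = ((e : ℤ) - 1) * ((e : ℤ) + 1) := by ring
    rwa [this] at h3'
  by_cases hl2 : ℓ = 2
  · -- ℓ = 2 : then a ≤ 1 and e is odd
    subst hl2
    have ha1 : a ≤ 1 := by
      by_contra h
      have h4 : (2 : ℕ) ^ 2 ∣ 6 * q := dvd_trans (pow_dvd_pow 2 (by omega)) hdvd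
      obtain ⟨k, hk⟩ := h4
      obtain ⟨m, hm⟩ := hodd
      omega
    have h2e : (2 : ℤ) ∣ (e : ℤ) - 1 := by
      obtain ⟨m, hm⟩ := heodd
      refine ⟨m, by push_cast [hm]; ring⟩
    left
    have : ((2 : ℕ) : ℤ) ^ a ∣ (e : ℤ) - 1 := by
      calc ((2 : ℕ) : ℤ) ^ a ∣ (2 : ℤ) ^ 1 := by
            exact_mod_cast pow_dvd_pow (2 : ℤ) ha1
        _ ∣ (e : ℤ) - 1 := by simpa using h2e
    exact (Int.modEq_iff_dvd.mpr (by simpa using (dvd_neg.mpr this))).symm.symm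
  · -- ℓ odd prime
    have hpz : Prime ((ℓ : ℤ)) := Nat.prime_iff_prime_int.mp hp
    by_cases h1 : (ℓ : ℤ) ∣ (e : ℤ) + 1
    · -- then ℓ does not divide e - 1
      have hnd : ¬ (ℓ : ℤ) ∣ (e : ℤ) - 1 := by
        intro h2
        have : (ℓ : ℤ) ∣ 2 := by
          have := dvd_sub h1 h2
          simpa using this
        have hl : (ℓ : ℕ) ∣ 2 := by exact_mod_cast this
        have := Nat.le_of_dvd (by norm_num) hl
        have := hp.two_le
        omega
      have hpow : ((ℓ : ℤ)) ^ a ∣ (e : ℤ) + 1 :=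
        (hpz.pow_dvd_of_dvd_mul_left a hnd hdint)
      right
      exact (Int.modEq_iff_dvd.mpr (by rw [show (-1 : ℤ) - (e : ℤ) = -((e : ℤ) + 1) by ring]; exact dvd_neg.mpr hpow)).symm.symm
    · have hpow : ((ℓ : ℤ)) ^ a ∣ (e : ℤ) - 1 :=
        (hpz.pow_dvd_of_dvd_mul_right a h1 hdint)
      left
      exact (Int.modEq_iff_dvd.mpr (by simpa using (dvd_neg.mpr hpow))).symm.symm
end

section
/- Let q be a positive integer with 12 | q and write q' = q/12. Then the pair (4q', 1+2q') is a critical pair if and only if q' is odd. -/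
theorem stmt14 (q : ℕ) (hq : 0 < q) (h12 : 12 ∣ q) :
    IsCritical (4 * (q / 12)) (1 + 2 * (q / 12)) ↔ Odd (q / 12) := by
  set k := q / 12 with hkdef
  have hk : 0 < k := Nat.div_pos (Nat.le_of_dvd hq h12) (by norm_num)
  constructor
  · intro h
    by_contra hodd
    have hke : Even k := Nat.not_odd_iff_even.mp hodd
    set v := padicValNat 2 k with hv
    have hv1 : 1 ≤ v := by
      have := (padicValNat_dvd_iff_le (p := 2) (n := 1) hk.ne').mpr
      exact one_le_padicValNat_of_dvd hk.ne' hke.two_dvd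
    have hdvdk : 2 ^ v ∣ k := pow_padicValNat_dvd
    have hndvd : ¬ 2 ^ (v + 1) ∣ k := pow_succ_padicValNat_not_dvd hk.ne'
    have hdvd4k : 2 ^ (v + 2) ∣ 4 * k := by
      obtain ⟨c, hc⟩ := hdvdk
      exact ⟨c, by rw [hc]; ring⟩
    rcases h.2.2.2.2 2 (v + 2) Nat.prime_two hdvd4k with hm | hm
    · have hd : ((2:ℤ)) ^ (v+2) ∣ ((1 + 2*k : ℕ) : ℤ) - 1 := (hm.symm).dvd
      have : ((2:ℤ)) ^ (v+2) ∣ (2 * k : ℤ) := by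
        convert hd using 1; push_cast; ring
      have h2 : ((2:ℤ)) ^ (v+1) ∣ (k : ℤ) := by
        obtain ⟨c, hc⟩ := this
        refine ⟨c, ?_⟩
        have h3 : (2:ℤ) * k = 2 * (2 ^ (v+1) * c) := by rw [hc]; ring
        linarith
      exact hndvd (by exact_mod_cast (Int.natCast_dvd_natCast.mp (by exact_mod_cast h2)))
    · have hd : ((2:ℤ)) ^ (v+2) ∣ ((1 + 2*k : ℕ) : ℤ) - (-1) := (hm.symm).dvd
      have : ((2:ℤ)) ^ (v+2) ∣ (2 * (k + 1) : ℤ) := by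
        convert hd using 1; push_cast; ring
      have h2 : ((2:ℤ)) ^ (v+1) ∣ ((k:ℤ) + 1) := by
        obtain ⟨c, hc⟩ := this
        refine ⟨c, ?_⟩
        have h3 : (2:ℤ) * (k + 1) = 2 * (2 ^ (v+1) * c) := by rw [hc]; ring
        linarith
      have h2' : (2:ℤ) ∣ ((k:ℤ) + 1) := dvd_trans (dvd_pow_self 2 (by omega : v + 1 ≠ 0)) h2
      obtain ⟨m, hm'⟩ := hke
      omega
  · intro hodd
    obtain ⟨m, hmk⟩ := hodd
    refine ⟨by omega, by omega, ?_, ⟨2 * k, by ring⟩, ?_⟩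
    · -- gcd (4k) (1+2k) = 1
      have h1 : Nat.Coprime k (1 + 2 * k) := by
        have := Nat.gcd_add_mul_right_right k 1 2
        simpa [Nat.Coprime] using this
      have h2 : Nat.Coprime 2 (1 + 2 * k) := by
        rw [Nat.Prime.coprime_iff_not_dvd Nat.prime_two]
        omega
      have : Nat.Coprime (4 * k) (1 + 2 * k) := by
        have h4 : Nat.Coprime 4 (1 + 2 * k) := by
          have := h2.pow_left 2
          simpa using this
        exact Nat.Coprime.mul h4 h1
      exact this
    · intro ℓ a hp hdvd
      by_cases hℓ : ℓ = 2
      · subst hℓ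
        have ha : a ≤ 2 := by
          by_contra hgt
          push_neg at hgt
          have h8 : 8 ∣ 4 * k := dvd_trans (by
            have : (2:ℕ) ^ 3 ∣ 2 ^ a := pow_dvd_pow 2 (by omega)
            simpa using this) hdvd
          omega
        interval_cases a
        · left; simp [Int.ModEq]
        · left
          have : ((2:ℤ)) ^ 1 ∣ 1 - ((1 + 2 * k : ℕ) : ℤ) := ⟨-(k:ℤ), by push_cast; ring⟩
          exact Int.ModEq.symm (Int.modEq_iff_dvd.mpr (by simpa using this)).symm
        · right
          have : ((2:ℤ)) ^ 2 ∣ (-1) - ((1 + 2 * k : ℕ) : ℤ) :=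
            ⟨-((m:ℤ) + 1), by push_cast [hmk]; ring⟩
          exact_mod_cast Int.modEq_iff_dvd.mpr this
      · have hodd2 : Nat.Coprime ℓ 4 := by
          have := (Nat.coprime_primes hp Nat.prime_two).mpr hℓ
          have h2 : Nat.Coprime ℓ 2 := this
          simpa using (h2.mul_right h2)
        have hdk : ℓ ^ a ∣ k :=
          (Nat.Coprime.pow_left a hodd2).dvd_of_dvd_mul_left hdvd
        left
        have : ((ℓ:ℤ)) ^ a ∣ 1 - ((1 + 2 * k : ℕ) : ℤ) := by
          obtain ⟨c, hc⟩ := hdk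
          exact ⟨-2 * c, by push_cast [hc]; ring⟩
        exact (Int.modEq_iff_dvd.mpr (by simpa using this)).symm
end

section
/- Let G ⊆ GL₂(K) be a finite abelian subgroup of diagonal matrices over an algebraically closed field K of characteristic zero, isomorphic to C_a × C_{ab}. Then the subgroup of G generated by pseudoreflections (elements fixing a hyperplane pointwise, i.e., diagonal matrices with at least one eigenvalue equal to 1) contains the subgroup C_a × C_a of all diagonal matrices in GL₂(K) whose order divides a and which lie in G; consequently the index of the pseudoreflection subgroup of G divides b. -/
/-- A pseudoreflection in `GL₂(K)`: a nonidentity element fixing a line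
(= hyperplane in dimension 2) pointwise. -/
def IsPseudoreflection {K : Type*} [Field K] (g : GL (Fin 2) K) : Prop :=
  g ≠ 1 ∧ ∃ v : Fin 2 → K, v ≠ 0 ∧ Matrix.mulVec (g : Matrix (Fin 2) (Fin 2) K) v = v

section Aux

/-- Counting the `a`-torsion of `ZMod (a*b)`. -/
lemma card_zmod_tors (a b : ℕ) (ha : 0 < a) (hb : 0 < b) :
    Nat.card {v : ZMod (a * b) // a • v = 0} = a := by
  have hab : 0 < a * b := Nat.mul_pos ha hb
  have : NeZero (a * b) := ⟨hab.ne'⟩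
  have : NeZero a := ⟨ha.ne'⟩
  have key : Function.Bijective
      (fun k : ZMod a => (⟨((b * k.val : ℕ) : ZMod (a * b)), by
        rw [nsmul_eq_mul, ← Nat.cast_mul, ZMod.natCast_eq_zero_iff]
        exact ⟨k.val, by ring⟩⟩ : {v : ZMod (a * b) // a • v = 0})) := by
    constructor
    · intro k l hkl
      have hk : b * k.val < a * b := by
        have h := mul_lt_mul_of_pos_left k.val_lt hb
        rwa [Nat.mul_comm b a] at h
      have hl : b * l.val < a * b := by
        have h := mul_lt_mul_of_pos_left l.val_lt hb
        rwa [Nat.mul_comm b a] at h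
      have h2 := congrArg (fun v : {v : ZMod (a*b) // a • v = 0} => v.1.val) hkl
      simp only [ZMod.val_cast_of_lt hk, ZMod.val_cast_of_lt hl] at h2
      exact ZMod.val_injective a (Nat.eq_of_mul_eq_mul_left hb h2)
    · rintro ⟨v, hv⟩
      have hvv : ((v.val : ℕ) : ZMod (a * b)) = v := by
        rw [ZMod.natCast_val, ZMod.cast_id]
      have hv' : (a * b : ℕ) ∣ a * v.val := by
        rw [← ZMod.natCast_eq_zero_iff, Nat.cast_mul, hvv]
        rwa [nsmul_eq_mul] at hv
      have hb' : b ∣ v.val := (Nat.mul_dvd_mul_iff_left ha).mp hv'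
      obtain ⟨m, hm⟩ := hb'
      have hmlt : m < a := by
        have h := v.val_lt
        rw [hm] at h
        by_contra hcon
        push_neg at hcon
        have h2 : b * a ≤ b * m := Nat.mul_le_mul_left b hcon
        rw [Nat.mul_comm a b] at h
        omega
      refine ⟨(m : ZMod a), Subtype.ext ?_⟩
      show ((b * ((m : ZMod a)).val : ℕ) : ZMod (a * b)) = v
      rw [ZMod.val_cast_of_lt hmlt, ← hm, hvv]
  have h := Nat.card_eq_of_bijective _ key
  rw [← h, Nat.card_zmod]

/-- Counting the `a`-torsion of `Multiplicative (ZMod (a*b))`. -/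
lemma card_mult_zmod_tors (a b : ℕ) (ha : 0 < a) (hb : 0 < b) :
    Nat.card {v : Multiplicative (ZMod (a * b)) // v ^ a = 1} = a := by
  have eqv : {v : Multiplicative (ZMod (a * b)) // v ^ a = 1} ≃ {v : ZMod (a * b) // a • v = 0} :=
    (Equiv.subtypeEquiv (Multiplicative.toAdd (α := ZMod (a * b))) (fun v => by
      constructor
      · intro h
        have h2 := congrArg Multiplicative.toAdd h
        simpa [toAdd_pow] using h2
      · intro h
        have h2 : (v ^ a).toAdd = (1 : Multiplicative (ZMod (a*b))).toAdd := by
          simpa [toAdd_pow] using h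
        exact Multiplicative.toAdd.injective h2))
  rw [Nat.card_congr eqv]
  exact card_zmod_tors a b ha hb

end Aux

theorem stmt18 {K : Type*} [Field K] [IsAlgClosed K] [CharZero K]
    (G : Subgroup (GL (Fin 2) K)) [Finite G]
    (hdiag : ∀ g ∈ G, ∀ i j : Fin 2, i ≠ j → (g : Matrix (Fin 2) (Fin 2) K) i j = 0)
    (a b : ℕ) (ha : 0 < a) (hb : 0 < b)
    (hiso : Nonempty (G ≃* Multiplicative (ZMod a) × Multiplicative (ZMod (a * b)))) :
    (∀ g ∈ G, g ^ a = 1 →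
        g ∈ Subgroup.closure {g : GL (Fin 2) K | g ∈ G ∧ IsPseudoreflection g}) ∧
      (Subgroup.closure {g : GL (Fin 2) K | g ∈ G ∧ IsPseudoreflection g}).relIndex G ∣ b := by
  obtain ⟨e⟩ := hiso
  have haK : NeZero ((a : K)) := ⟨Nat.cast_ne_zero.mpr ha.ne'⟩
  have haN : NeZero a := ⟨ha.ne'⟩
  -- every element of G is a diagonal matrix
  have hdg : ∀ g ∈ G, (g : Matrix (Fin 2) (Fin 2) K) =
      Matrix.diagonal (fun i => (g : Matrix (Fin 2) (Fin 2) K) i i) := by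
    intro g hg
    ext i j
    rcases eq_or_ne i j with rfl | hij
    · simp [Matrix.diagonal_apply_eq]
    · rw [Matrix.diagonal_apply_ne _ hij]
      exact hdiag g hg i j hij
  -- diagonal entries multiply
  have hmul : ∀ g ∈ G, ∀ h ∈ G, ∀ i : Fin 2,
      ((g * h : GL (Fin 2) K) : Matrix (Fin 2) (Fin 2) K) i i
        = (g : Matrix (Fin 2) (Fin 2) K) i i * (h : Matrix (Fin 2) (Fin 2) K) i i := by
    intro g hg h hh i
    have e01 := hdiag g hg 0 1 (by decide)
    have e10 := hdiag g hg 1 0 (by decide)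
    have f01 := hdiag h hh 0 1 (by decide)
    have f10 := hdiag h hh 1 0 (by decide)
    show ((g : Matrix (Fin 2) (Fin 2) K) * (h : Matrix (Fin 2) (Fin 2) K)) i i = _
    revert i
    rw [Fin.forall_fin_two]
    constructor
    · simp [Matrix.mul_apply, Fin.sum_univ_two, e01, f10]
    · simp [Matrix.mul_apply, Fin.sum_univ_two, e10, f01]
  -- elements of G commute
  have hcomm : ∀ g ∈ G, ∀ h ∈ G, g * h = h * g := by
    intro g hg h hh
    apply Units.ext
    show (g : Matrix (Fin 2) (Fin 2) K) * h = (h : Matrix (Fin 2) (Fin 2) K) * g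
    rw [hdg g hg, hdg h hh, Matrix.diagonal_mul_diagonal, Matrix.diagonal_mul_diagonal]
    exact congrArg Matrix.diagonal (funext fun i => mul_comm _ _)
  -- diagonal entries of elements of G are units
  have hunit : ∀ g ∈ G, ∀ i : Fin 2,
      (g : Matrix (Fin 2) (Fin 2) K) i i * ((g⁻¹ : GL (Fin 2) K) : Matrix (Fin 2) (Fin 2) K) i i
        = 1 := by
    intro g hg i
    have h1 := hmul g hg g⁻¹ (G.inv_mem hg) i
    rw [mul_inv_cancel] at h1
    rw [← h1, Units.val_one, Matrix.one_apply_eq]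
  -- diagonal entries behave well under powers
  have hpow : ∀ g ∈ G, ∀ n : ℕ, ∀ i : Fin 2,
      ((g ^ n : GL (Fin 2) K) : Matrix (Fin 2) (Fin 2) K) i i
        = ((g : Matrix (Fin 2) (Fin 2) K) i i) ^ n := by
    intro g hg n
    induction n with
    | zero =>
      intro i
      simp [Units.val_one, Matrix.one_apply_eq]
    | succ n ih =>
      intro i
      rw [pow_succ, hmul (g ^ n) (G.pow_mem hg n) g hg i, ih i, pow_succ]
  -- the unit attached to a diagonal entry
  let u : ∀ g : GL (Fin 2) K, g ∈ G → Fin 2 → Kˣ := fun g hg i =>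
    ⟨(g : Matrix (Fin 2) (Fin 2) K) i i,
     ((g⁻¹ : GL (Fin 2) K) : Matrix (Fin 2) (Fin 2) K) i i,
     hunit g hg i, by
      have h1 := hunit g⁻¹ (G.inv_mem hg) i
      rwa [inv_inv] at h1⟩
  -- the torsion subgroup
  let T : Subgroup (GL (Fin 2) K) :=
  { carrier := {g | g ∈ G ∧ g ^ a = 1}
    one_mem' := ⟨G.one_mem, one_pow a⟩
    mul_mem' := fun {x y} hx hy => ⟨G.mul_mem hx.1 hy.1, by
      rw [Commute.mul_pow (hcomm x hx.1 y hy.1), hx.2, hy.2, one_mul]⟩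
    inv_mem' := fun {x} hx => ⟨G.inv_mem hx.1, by rw [inv_pow, hx.2, inv_one]⟩ }
  -- the map from T to pairs of roots of unity
  have hrou : ∀ (g : GL (Fin 2) K) (hg : g ∈ T) (i : Fin 2), u g hg.1 i ∈ rootsOfUnity a K := by
    intro g hg i
    rw [mem_rootsOfUnity']
    show ((g : Matrix (Fin 2) (Fin 2) K) i i) ^ a = 1
    rw [← hpow g hg.1 a i, hg.2, Units.val_one, Matrix.one_apply_eq]
  let φ : {g : GL (Fin 2) K // g ∈ T} → (rootsOfUnity a K × rootsOfUnity a K) := fun g =>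
    (⟨u g.1 g.2.1 0, hrou g.1 g.2 0⟩, ⟨u g.1 g.2.1 1, hrou g.1 g.2 1⟩)
  -- φ is injective
  have hinj : Function.Injective φ := by
    rintro ⟨g, hgG, hga⟩ ⟨g', hg'G, hg'a⟩ hgg'
    have h0 : (g : Matrix (Fin 2) (Fin 2) K) 0 0 = (g' : Matrix (Fin 2) (Fin 2) K) 0 0 :=
      congrArg (fun p : rootsOfUnity a K × rootsOfUnity a K => ((p.1 : Kˣ) : K)) hgg'
    have h1 : (g : Matrix (Fin 2) (Fin 2) K) 1 1 = (g' : Matrix (Fin 2) (Fin 2) K) 1 1 :=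
      congrArg (fun p : rootsOfUnity a K × rootsOfUnity a K => ((p.2 : Kˣ) : K)) hgg'
    have hfun : (fun i => (g : Matrix (Fin 2) (Fin 2) K) i i)
        = (fun i => (g' : Matrix (Fin 2) (Fin 2) K) i i) := by
      funext i
      revert i
      rw [Fin.forall_fin_two]
      exact ⟨h0, h1⟩
    apply Subtype.ext
    apply Units.ext
    show (g : Matrix (Fin 2) (Fin 2) K) = (g' : Matrix (Fin 2) (Fin 2) K)
    rw [hdg g hgG, hdg g' hg'G, hfun]
  -- computing the cardinality of T
  have hcardT : Nat.card {g : GL (Fin 2) K // g ∈ T} = a * a := by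
    have e1 : {g : GL (Fin 2) K // g ∈ T} ≃ {x : G // x ^ a = 1} :=
      { toFun := fun g => ⟨⟨g.1, g.2.1⟩, by
          apply Subtype.ext
          simpa using g.2.2⟩
        invFun := fun x => ⟨x.1.1, x.1.2, by
          simpa using congrArg (Subtype.val) x.2⟩
        left_inv := fun g => rfl
        right_inv := fun x => rfl }
    have e2 : {x : G // x ^ a = 1} ≃
        {y : Multiplicative (ZMod a) × Multiplicative (ZMod (a * b)) // y ^ a = 1} :=
      Equiv.subtypeEquiv e.toEquiv (fun x => by
        show x ^ a = 1 ↔ (e x) ^ a = 1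
        constructor
        · intro h; rw [← map_pow, h, map_one]
        · intro h
          apply e.injective
          rw [map_pow, h, map_one])
    have e3 : {y : Multiplicative (ZMod a) × Multiplicative (ZMod (a * b)) // y ^ a = 1} ≃
        {y : Multiplicative (ZMod a) × Multiplicative (ZMod (a * b)) //
          y.1 ^ a = 1 ∧ y.2 ^ a = 1} :=
      Equiv.subtypeEquivRight (fun y => by
        rw [Prod.pow_def, Prod.ext_iff]
        rfl)
    have e4 := @Equiv.subtypeProdEquivProd (Multiplicative (ZMod a))
        (Multiplicative (ZMod (a * b))) (fun u => u ^ a = 1) (fun v => v ^ a = 1)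
    have c1 : Nat.card {x : Multiplicative (ZMod a) // x ^ a = 1} = a := by
      have hall : ∀ x : Multiplicative (ZMod a), x ^ a = 1 := by
        intro x
        have h2 : (x ^ a).toAdd = (1 : Multiplicative (ZMod a)).toAdd := by
          simp [toAdd_pow, nsmul_eq_mul]
        exact Multiplicative.toAdd.injective h2
      rw [Nat.card_congr (Equiv.subtypeUnivEquiv hall)]
      exact Nat.card_zmod a
    have c2 := card_mult_zmod_tors a b ha hb
    rw [Nat.card_congr (((e1.trans e2).trans e3).trans e4), Nat.card_prod, c1, c2]
  -- the target has cardinality a * a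
  have hcardB : Nat.card (rootsOfUnity a K × rootsOfUnity a K) = a * a := by
    rw [Nat.card_prod, HasEnoughRootsOfUnity.natCard_rootsOfUnity K a]
  -- φ is surjective
  have hsurj : Function.Surjective φ :=
    ((Nat.bijective_iff_injective_and_card φ).mpr
      ⟨hinj, by rw [hcardT, hcardB]⟩).surjective
  set S : Set (GL (Fin 2) K) := {g : GL (Fin 2) K | g ∈ G ∧ IsPseudoreflection g} with hS
  -- an element of G which is diagonal with one entry 1 is in the closure
  have hclos : ∀ g ∈ G, ((g : Matrix (Fin 2) (Fin 2) K) 0 0 = 1 ∨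
      (g : Matrix (Fin 2) (Fin 2) K) 1 1 = 1) → g ∈ Subgroup.closure S := by
    intro g hg hor
    by_cases hone : g = 1
    · rw [hone]; exact Subgroup.one_mem _
    · apply Subgroup.subset_closure
      refine ⟨hg, hone, ?_⟩
      rcases hor with h0 | h1
      · refine ⟨![1, 0], ?_, ?_⟩
        · intro hcon
          exact one_ne_zero (α := K) (by simpa using congrFun hcon 0)
        · rw [hdg g hg]
          funext i
          rw [Matrix.mulVec_diagonal]
          revert i
          rw [Fin.forall_fin_two]
          constructor
          · simpa using h0
          · simp
      · refine ⟨![0, 1], ?_, ?_⟩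
        · intro hcon
          exact one_ne_zero (α := K) (by simpa using congrFun hcon 1)
        · rw [hdg g hg]
          funext i
          rw [Matrix.mulVec_diagonal]
          revert i
          rw [Fin.forall_fin_two]
          constructor
          · simp
          · simpa using h1
  -- Part 1
  have part1 : ∀ g ∈ G, g ^ a = 1 → g ∈ Subgroup.closure S := by
    intro g hg hga
    have hgT : g ∈ T := ⟨hg, hga⟩
    obtain ⟨g1, hg1⟩ := hsurj ((φ ⟨g, hgT⟩).1, 1)
    obtain ⟨g2, hg2⟩ := hsurj (1, (φ ⟨g, hgT⟩).2)
    have hg1_0 : (g1.1 : Matrix (Fin 2) (Fin 2) K) 0 0 = (g : Matrix (Fin 2) (Fin 2) K) 0 0 :=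
      congrArg (fun p : rootsOfUnity a K × rootsOfUnity a K => ((p.1 : Kˣ) : K)) hg1
    have hg1_1 : (g1.1 : Matrix (Fin 2) (Fin 2) K) 1 1 = 1 :=
      congrArg (fun p : rootsOfUnity a K × rootsOfUnity a K => ((p.2 : Kˣ) : K)) hg1
    have hg2_0 : (g2.1 : Matrix (Fin 2) (Fin 2) K) 0 0 = 1 :=
      congrArg (fun p : rootsOfUnity a K × rootsOfUnity a K => ((p.1 : Kˣ) : K)) hg2
    have hg2_1 : (g2.1 : Matrix (Fin 2) (Fin 2) K) 1 1 = (g : Matrix (Fin 2) (Fin 2) K) 1 1 :=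
      congrArg (fun p : rootsOfUnity a K × rootsOfUnity a K => ((p.2 : Kˣ) : K)) hg2
    have hgprod : g = g1.1 * g2.1 := by
      have hfun : (fun i => (g : Matrix (Fin 2) (Fin 2) K) i i)
          = (fun i => ((g1.1 * g2.1 : GL (Fin 2) K) : Matrix (Fin 2) (Fin 2) K) i i) := by
        funext i
        revert i
        rw [Fin.forall_fin_two]
        constructor
        · rw [hmul g1.1 g1.2.1 g2.1 g2.2.1 0, hg1_0, hg2_0, mul_one]
        · rw [hmul g1.1 g1.2.1 g2.1 g2.2.1 1, hg1_1, hg2_1, one_mul]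
      apply Units.ext
      show (g : Matrix (Fin 2) (Fin 2) K) = ((g1.1 * g2.1 : GL (Fin 2) K) : Matrix (Fin 2) (Fin 2) K)
      rw [hdg g hg, hdg _ (G.mul_mem g1.2.1 g2.2.1), hfun]
    rw [hgprod]
    exact Subgroup.mul_mem _ (hclos g1.1 g1.2.1 (Or.inr hg1_1)) (hclos g2.1 g2.2.1 (Or.inl hg2_0))
  refine ⟨part1, ?_⟩
  -- Part 2
  set H := Subgroup.closure S with hH
  have hTH : T.subgroupOf G ≤ H.subgroupOf G := by
    intro x hx
    have hx' : (x : GL (Fin 2) K) ∈ T := hx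
    exact part1 x.1 x.2 hx'.2
  have hdvd : (H.subgroupOf G).index ∣ (T.subgroupOf G).index :=
    Subgroup.index_dvd_of_le hTH
  have hcardG : Nat.card G = a * (a * b) := by
    rw [Nat.card_congr e.toEquiv, Nat.card_prod,
      Nat.card_congr (Multiplicative.toAdd (α := ZMod a)),
      Nat.card_congr (Multiplicative.toAdd (α := ZMod (a * b))),
      Nat.card_zmod, Nat.card_zmod]
  have hcardTG : Nat.card (T.subgroupOf G) = a * a := by
    rw [← hcardT]
    apply Nat.card_congr
    exact { toFun := fun x => ⟨x.1.1, x.2⟩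
            invFun := fun g => ⟨⟨g.1, g.2.1⟩, g.2⟩
            left_inv := fun x => rfl
            right_inv := fun g => rfl }
  have hTidx : (T.subgroupOf G).index = b := by
    have h1 := Subgroup.card_mul_index (T.subgroupOf G)
    rw [hcardTG, hcardG] at h1
    have ha2 : 0 < a * a := Nat.mul_pos ha ha
    apply Nat.eq_of_mul_eq_mul_left ha2
    rw [h1]
    ring
  have hfin : (H.subgroupOf G).index ∣ b := hTidx ▸ hdvd
  exact hfin
end
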